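/- For the vector a = (0, 1, 0) ∈ ℤ³ the tropical entropy equals H(a) = 1/4; hence the lower bound H ≥ 1/4 for non-regular integer vectors is sharp. -/

import Mathlib

open Filter Topology

/-- The minimum of `z (j + i) + a i` over `0 ≤ i ≤ n` is attained for at least two
distinct indices `i₁ ≠ i₂`. -/
def TropWindow (n : ℕ) (a : ℕ → ℤ) (z : ℕ → ℝ) (j : ℕ) : Prop :=
  ∃ i₁ i₂ : ℕ, i₁ ≤ n ∧ i₂ ≤ n ∧ i₁ ≠ i₂ ∧
    (∀ i ≤ n, z (j + i₁) + (a i₁ : ℝ) ≤ z (j + i) + (a i : ℝ)) ∧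
    (∀ i ≤ n, z (j + i₂) + (a i₂ : ℝ) ≤ z (j + i) + (a i : ℝ))

/-- `D(s) ⊆ ℝ^s`: the set of finite sequences `(y_0, …, y_{s-1})` satisfying the
vector `a = (a_0, …, a_n)`, i.e. for every window `j` with `j + n < s` the minimum
`min_{0 ≤ i ≤ n} (y_{j+i} + a_i)` is attained at least twice. -/
def tropD (n : ℕ) (a : ℕ → ℤ) (s : ℕ) : Set (Fin s → ℝ) :=
  {y | ∀ j : ℕ, j + n < s →
    TropWindow n a (fun k => if h : k < s then y ⟨k, h⟩ else 0) j}

/-- The tropical Hilbert function `d(s) := dim D(s)` (the Hausdorff dimension of the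
finite union of polyhedra `D(s)`). -/
noncomputable def tropHilbert (n : ℕ) (a : ℕ → ℤ) (s : ℕ) : ℝ :=
  (dimH (tropD n a s)).toReal

namespace Trop010

noncomputable section
open Classical

def av : ℕ → ℤ := fun i => if i = 1 then 1 else 0

def CA (z : ℕ → ℝ) (j : ℕ) : Prop := z j = z (j+2)
def CB (z : ℕ → ℝ) (j : ℕ) : Prop := z j = z (j+1) + 1 ∧ z j < z (j+2)
def CC (z : ℕ → ℝ) (j : ℕ) : Prop := z (j+2) = z (j+1) + 1 ∧ z (j+2) < z j

lemma trichotomy {z : ℕ → ℝ} {j : ℕ} (h : TropWindow 2 av z j) :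
    CA z j ∨ CB z j ∨ CC z j := by
  obtain ⟨i₁, i₂, h₁, h₂, hne, m₁, m₂⟩ := h
  have e10 := m₁ 0 (by norm_num); have e11 := m₁ 1 (by norm_num)
  have e12 := m₁ 2 (by norm_num)
  have e20 := m₂ 0 (by norm_num); have e21 := m₂ 1 (by norm_num)
  have e22 := m₂ 2 (by norm_num)
  clear m₁ m₂
  unfold CA CB CC
  interval_cases i₁ <;> interval_cases i₂ <;>
    first
    | exact absurd rfl hne
    | (norm_num [av] at e10 e11 e12 e20 e21 e22
       by_cases hA : z j = z (j+2)
       · exact Or.inl hA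
       · first
         | exact Or.inr (Or.inl ⟨by linarith, lt_of_le_of_ne (by linarith) hA⟩)
         | exact Or.inr (Or.inr ⟨by linarith,
             lt_of_le_of_ne (by linarith) (fun e => hA e.symm)⟩)
         | exact Or.inl (le_antisymm (by linarith) (by linarith)))

lemma no_adjacent {z : ℕ → ℝ} {j : ℕ} (h1 : CB z j ∨ CC z j)
    (h2 : CB z (j+1) ∨ CC z (j+1)) : False := by
  have e3 : j + 1 + 2 = j + 3 := by ring
  have e2 : j + 1 + 1 = j + 2 := by ring
  unfold CB CC at h1 h2
  rw [e3, e2] at h2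
  rcases h1 with ⟨b1, b2⟩ | ⟨c1, c2⟩ <;> rcases h2 with ⟨d1, d2⟩ | ⟨f1, f2⟩ <;> linarith



/-- pattern of a sequence: 0 = A (preferred), 1 = B, 2 = C -/
def pat (z : ℕ → ℝ) (j : ℕ) : ℕ :=
  if CA z j then 0 else if CB z j then 1 else 2

/-- left-to-right scan: expresses `z k` as `z (σ k) + ν k`. -/
def scanL (c : ℕ → ℕ) (s : ℕ) : ℕ → ℕ × ℤ
  | k =>
    if h : 2 ≤ k ∧ k < s then
      if c (k-2) = 0 then scanL c s (k-2)
      else if c (k-2) = 1 then (k, 0)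
      else ((scanL c s (k-1)).1, (scanL c s (k-1)).2 + 1)
    else (k, 0)
termination_by k => k
decreasing_by all_goals omega

/-- right-to-left scan -/
def scanR (c : ℕ → ℕ) (s : ℕ) : ℕ → ℕ × ℤ
  | k =>
    if h : k + 2 < s then
      if c k = 0 then scanR c s (k+2)
      else if c k = 1 then ((scanR c s (k+1)).1, (scanR c s (k+1)).2 + 1)
      else (k, 0)
    else (k, 0)
termination_by k => s - k
decreasing_by all_goals omega

lemma scanL_le (c : ℕ → ℕ) (s : ℕ) : ∀ k, (scanL c s k).1 ≤ k := by
  intro k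
  induction k using Nat.strong_induction_on with
  | _ k ih =>
    rw [scanL]
    split
    · rename_i h
      split
      · exact le_trans (ih (k-2) (by omega)) (by omega)
      · split
        · exact le_refl k
        · exact le_trans (ih (k-1) (by omega)) (by omega)
    · exact le_refl k

lemma scanL_correct (z : ℕ → ℝ) (s : ℕ)
    (hA : ∀ j, j + 2 < s → pat z j = 0 → z j = z (j+2))
    (hC : ∀ j, j + 2 < s → pat z j = 2 → z (j+2) = z (j+1) + 1) :
    ∀ k < s, z k = z ((scanL (pat z) s k).1) + ((scanL (pat z) s k).2 : ℝ) := by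
  intro k
  induction k using Nat.strong_induction_on with
  | _ k ih =>
    intro hk
    rw [scanL]
    split
    · rename_i h
      split
      · rename_i h0
        have := hA (k-2) (by omega) h0
        have e : k - 2 + 2 = k := by omega
        rw [e] at this
        rw [← this]
        exact ih (k-2) (by omega) (by omega)
      · split
        · simp
        · rename_i h0 h1
          have h2 : pat z (k-2) = 2 := by unfold pat at *; split_ifs at * <;> simp_all
          have := hC (k-2) (by omega) h2
          have e : k - 2 + 2 = k := by omega
          have e1 : k - 2 + 1 = k - 1 := by omega
          rw [e, e1] at this
          have ihh := ih (k-1) (by omega) (by omega)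
          push_cast
          rw [this, ihh]
          ring
    · simp

lemma scanL_stop (c : ℕ → ℕ) (s : ℕ) :
    ∀ k < s, (scanL c s k).1 < 2 ∨
      (2 ≤ (scanL c s k).1 ∧ (scanL c s k).1 < s ∧ c ((scanL c s k).1 - 2) = 1) := by
  intro k
  induction k using Nat.strong_induction_on with
  | _ k ih =>
    intro hk
    rw [scanL]
    split
    · rename_i h
      split
      · exact ih (k-2) (by omega) (by omega)
      · split
        · rename_i h0 h1
          right; exact ⟨by omega, by omega, h1⟩
        · exact ih (k-1) (by omega) (by omega)
    · rename_i h
      left; omega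

lemma scanR_lt (c : ℕ → ℕ) (s : ℕ) :
    ∀ n k, s - k ≤ n → k < s → (scanR c s k).1 < s := by
  intro n
  induction n with
  | zero => intro k h1 h2; omega
  | succ n ih =>
    intro k h1 h2
    rw [scanR]
    split
    · rename_i h
      split
      · exact ih (k+2) (by omega) (by omega)
      · split
        · exact ih (k+1) (by omega) (by omega)
        · exact h2
    · exact h2

lemma scanR_correct (z : ℕ → ℝ) (s : ℕ)
    (hA : ∀ j, j + 2 < s → pat z j = 0 → z j = z (j+2))
    (hB : ∀ j, j + 2 < s → pat z j = 1 → z j = z (j+1) + 1) :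
    ∀ n k, s - k ≤ n → k < s →
      z k = z ((scanR (pat z) s k).1) + ((scanR (pat z) s k).2 : ℝ) := by
  intro n
  induction n with
  | zero => intro k h1 h2; omega
  | succ n ih =>
    intro k h1 h2
    rw [scanR]
    split
    · rename_i h
      split
      · rename_i h0
        rw [hA k h h0]
        exact ih (k+2) (by omega) (by omega)
      · split
        · rename_i h0 h1'
          have := hB k h h1'
          have ihh := ih (k+1) (by omega) (by omega)
          push_cast
          rw [this, ihh]
          ring
        · simp
    · simp

lemma scanR_stop (c : ℕ → ℕ) (s : ℕ) :
    ∀ n k, s - k ≤ n → k < s →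
      ¬ ((scanR c s k).1 + 2 < s) ∨ (c ((scanR c s k).1) ≠ 0 ∧ c ((scanR c s k).1) ≠ 1) := by
  intro n
  induction n with
  | zero => intro k h1 h2; omega
  | succ n ih =>
    intro k h1 h2
    rw [scanR]
    split
    · rename_i h
      split
      · exact ih (k+2) (by omega) (by omega)
      · split
        · exact ih (k+1) (by omega) (by omega)
        · rename_i h0 h1'
          right
          exact ⟨h0, h1'⟩
    · left; simpa using (by omega : ¬ (k + 2 < s))


lemma card_no_adjacent {n : ℕ} (S : Finset ℕ) (hS : S ⊆ Finset.range n)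
    (hadj : ∀ j, j ∈ S → j + 1 ∈ S → False) : S.card ≤ (n + 1) / 2 := by
  have key : S.card ≤ (Finset.range ((n + 1) / 2)).card := by
    apply Finset.card_le_card_of_injOn (fun j => j / 2)
    · intro j hj
      have := Finset.mem_range.1 (hS hj)
      exact Finset.mem_range.2 (by dsimp only; omega)
    · intro j hj j' hj' he
      simp only at he
      by_contra hne
      rcases (by omega : j' = j + 1 ∨ j = j' + 1) with h | h
      · exact hadj j hj (h ▸ hj')
      · exact hadj j' hj' (h ▸ hj)
  simpa using key

lemma mem_cover {s N : ℕ} (y : Fin s → ℝ) (σ' : Fin s → Fin s) (ν : Fin s → ℤ)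
    (hy : ∀ k : Fin s, y k = y (σ' k) + (ν k : ℝ))
    (hcard : (Finset.image σ' Finset.univ).card ≤ N) :
    ∃ (p : (Fin s → Fin N) × (Fin s → ℤ)) (x : Fin N → ℝ),
      (fun k => x (p.1 k) + ((p.2 k : ℤ) : ℝ)) = y := by
  set T := Finset.image σ' Finset.univ with hT
  set K := T.card with hK
  have iso := T.orderIsoOfFin rfl
  have hmem : ∀ k : Fin s, σ' k ∈ T := fun k => Finset.mem_image_of_mem _ (Finset.mem_univ k)
  refine ⟨⟨fun k => Fin.castLE hcard (iso.symm ⟨σ' k, hmem k⟩), fun k => ν k⟩,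
    fun i => if h : i.1 < K then y ((iso ⟨i.1, h⟩ : {x // x ∈ T}) : Fin s) else 0, ?_⟩
  funext k
  simp only []
  have hlt : (Fin.castLE hcard (iso.symm ⟨σ' k, hmem k⟩)).1 < K :=
    (iso.symm ⟨σ' k, hmem k⟩).2
  rw [dif_pos hlt]
  have : (⟨(Fin.castLE hcard (iso.symm ⟨σ' k, hmem k⟩)).1, hlt⟩ : Fin K)
      = iso.symm ⟨σ' k, hmem k⟩ := by
    apply Fin.ext; rfl
  rw [this, OrderIso.apply_symm_apply]
  exact (hy k).symm


lemma pat_zero {z : ℕ → ℝ} {j : ℕ} (h : pat z j = 0) : CA z j := by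
  unfold pat at h; split_ifs at h <;> simp_all

lemma pat_one {z : ℕ → ℝ} {j : ℕ} (h : pat z j = 1) : CB z j := by
  unfold pat at h; split_ifs at h <;> simp_all

lemma pat_other {z : ℕ → ℝ} {j : ℕ} (h1 : pat z j ≠ 0) (h2 : pat z j ≠ 1) :
    ¬ CA z j ∧ ¬ CB z j := by
  unfold pat at h1 h2; split_ifs at h1 h2 <;> simp_all

lemma pat_ne_zero {z : ℕ → ℝ} {j : ℕ} (h : pat z j ≠ 0) : ¬ CA z j := by
  unfold pat at h; split_ifs at h <;> simp_all

end
end Trop010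

namespace Trop010
noncomputable section
open Classical Set ENNReal

theorem dimH_upper (s : ℕ) :
    dimH (tropD 2 av s) ≤ ((2 + (s - 1) / 4 : ℕ) : ℝ≥0∞) := by
  set N := 2 + (s - 1) / 4 with hN
  let H : ((Fin s → Fin N) × (Fin s → ℤ)) → (Fin N → ℝ) → (Fin s → ℝ) :=
    fun p x k => x (p.1 k) + ((p.2 k : ℤ) : ℝ)
  have hLip : ∀ p, LipschitzWith 1 (H p) := by
    intro p
    apply LipschitzWith.of_dist_le_mul
    intro x x'
    rw [NNReal.coe_one, one_mul, dist_pi_le_iff dist_nonneg]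
    intro k
    simpa [H] using dist_le_pi_dist x x' (p.1 k)
  have hcov : tropD 2 av s ⊆ ⋃ p, Set.range (H p) := by
    intro y hy
    set z : ℕ → ℝ := fun k => if h : k < s then y ⟨k, h⟩ else 0 with hz
    have windows : ∀ j, j + 2 < s → TropWindow 2 av z j := hy
    have hA : ∀ j, j + 2 < s → pat z j = 0 → z j = z (j + 2) := fun j _ h => pat_zero h
    have hB : ∀ j, j + 2 < s → pat z j = 1 → z j = z (j + 1) + 1 :=
      fun j _ h => (pat_one h).1
    have hC : ∀ j, j + 2 < s → pat z j = 2 → z (j + 2) = z (j + 1) + 1 := by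
      intro j hj h
      have h2 := pat_other (z := z) (j := j) (by omega) (by omega)
      rcases trichotomy (windows j hj) with h' | h' | h'
      · exact absurd h' h2.1
      · exact absurd h' h2.2
      · exact h'.1
    have hCC : ∀ j, j + 2 < s → pat z j ≠ 0 → pat z j ≠ 1 → CC z j := by
      intro j hj h0 h1
      have h2 := pat_other h0 h1
      rcases trichotomy (windows j hj) with h' | h' | h'
      · exact absurd h' h2.1
      · exact absurd h' h2.2
      · exact h'
    -- counting
    set W := Finset.range (s - 2) with hW
    set Bs := W.filter (fun j => pat z j = 1) with hBs
    set Cs := W.filter (fun j => pat z j ≠ 0 ∧ pat z j ≠ 1) with hCs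
    have hScard : Bs.card + Cs.card ≤ (s - 1) / 2 := by
      have hdisj : Disjoint Bs Cs := by
        rw [Finset.disjoint_filter]
        intro j _ h1 h2
        exact h2.2 h1
      rw [← Finset.card_union_of_disjoint hdisj]
      have hsub : Bs ∪ Cs ⊆ Finset.range (s - 2) := by
        intro j hj
        rcases Finset.mem_union.1 hj with h | h
        · exact Finset.mem_filter.1 h |>.1
        · exact Finset.mem_filter.1 h |>.1
      have hadj : ∀ j, j ∈ Bs ∪ Cs → j + 1 ∈ Bs ∪ Cs → False := by
        intro j hj hj1
        have hjW : j < s - 2 := Finset.mem_range.1 (hsub hj)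
        have hj1W : j + 1 < s - 2 := Finset.mem_range.1 (hsub hj1)
        have mk : ∀ i, i ∈ Bs ∪ Cs → i + 2 < s → CB z i ∨ CC z i := by
          intro i hi hi2
          rcases Finset.mem_union.1 hi with h | h
          · exact Or.inl (pat_one (Finset.mem_filter.1 h).2)
          · exact Or.inr (hCC i hi2 (Finset.mem_filter.1 h).2.1 (Finset.mem_filter.1 h).2.2)
        exact no_adjacent (mk j hj (by omega)) (mk (j + 1) hj1 (by omega))
      have := card_no_adjacent (n := s - 2) (Bs ∪ Cs) (fun j hj => hsub hj) hadj
      calc (Bs ∪ Cs).card ≤ (s - 2 + 1) / 2 := this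
        _ ≤ (s - 1) / 2 := by omega
    have hmin : min Bs.card Cs.card ≤ (s - 1) / 4 := by
      have h1 : min Bs.card Cs.card * 2 ≤ (s - 1) / 2 := by omega
      have : min Bs.card Cs.card ≤ (s - 1) / 2 / 2 := Nat.le_div_iff_mul_le (by norm_num) |>.2 h1
      calc min Bs.card Cs.card ≤ (s - 1) / 2 / 2 := this
        _ = (s - 1) / 4 := by omega
    -- two branches
    have main : ∃ (σ' : Fin s → Fin s) (ν : Fin s → ℤ),
        (∀ k : Fin s, y k = y (σ' k) + ((ν k : ℤ) : ℝ)) ∧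
        (Finset.image σ' Finset.univ).card ≤ N := by
      by_cases hbc : Bs.card ≤ Cs.card
      · -- scanL, selected ≤ 2 + Bs.card
        have hBb : Bs.card ≤ (s - 1) / 4 := by omega
        set σ : ℕ → ℕ := fun k => (scanL (pat z) s k).1 with hσ
        have hσle : ∀ k, σ k ≤ k := scanL_le (pat z) s
        refine ⟨fun k => ⟨σ k.1, lt_of_le_of_lt (hσle k.1) k.2⟩,
          fun k => (scanL (pat z) s k.1).2, ?_, ?_⟩
        · intro k
          have hcor := scanL_correct z s hA hC k.1 k.2
          have e1 : z k.1 = y k := by rw [hz]; simp [k.2]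
          have e2 : z (σ k.1) = y ⟨σ k.1, lt_of_le_of_lt (hσle k.1) k.2⟩ := by
            rw [hz]; simp [lt_of_le_of_lt (hσle k.1) k.2]
          rw [← e1, ← e2]
          exact hcor
        · -- card bound
          set T := Finset.image (fun k : Fin s => (⟨σ k.1, lt_of_le_of_lt (hσle k.1) k.2⟩ : Fin s))
            Finset.univ with hT
          have hsub : T ⊆ Finset.univ.filter (fun t : Fin s => t.1 < 2) ∪
              Finset.univ.filter (fun t : Fin s => 2 ≤ t.1 ∧ pat z (t.1 - 2) = 1) := by
            intro t ht
            rw [hT, Finset.mem_image] at ht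
            obtain ⟨k, _, hk⟩ := ht
            have := scanL_stop (pat z) s k.1 k.2
            rcases this with h | h
            · exact Finset.mem_union_left _ (Finset.mem_filter.2 ⟨Finset.mem_univ _, by
                rw [← hk]; exact h⟩)
            · exact Finset.mem_union_right _ (Finset.mem_filter.2 ⟨Finset.mem_univ _, by
                rw [← hk]; exact ⟨h.1, h.2.2⟩⟩)
          have h1 : (Finset.univ.filter (fun t : Fin s => t.1 < 2)).card ≤ 2 := by
            have : (Finset.univ.filter (fun t : Fin s => t.1 < 2)).card ≤
                (Finset.range 2).card := by
              apply Finset.card_le_card_of_injOn Fin.val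
              · intro t ht
                exact Finset.mem_range.2 (Finset.mem_filter.1 ht).2
              · intro a _ b _ hab
                exact Fin.ext hab
            simpa using this
          have h2 : (Finset.univ.filter (fun t : Fin s => 2 ≤ t.1 ∧ pat z (t.1 - 2) = 1)).card ≤
              Bs.card := by
            apply Finset.card_le_card_of_injOn (fun t => t.1 - 2)
            · intro t ht
              have ht' := (Finset.mem_filter.1 ht).2
              refine Finset.mem_filter.2 ⟨Finset.mem_range.2 ?_, ht'.2⟩
              have := t.2
              dsimp only
              omega
            · intro a ha b hb hab
              have ha' := (Finset.mem_filter.1 ha).2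
              have hb' := (Finset.mem_filter.1 hb).2
              apply Fin.ext
              simp only at hab
              omega
          calc T.card ≤ _ := Finset.card_le_card hsub
            _ ≤ _ := Finset.card_union_le _ _
            _ ≤ 2 + Bs.card := by omega
            _ ≤ N := by omega
      · -- scanR
        have hCb : Cs.card ≤ (s - 1) / 4 := by omega
        set σ : ℕ → ℕ := fun k => (scanR (pat z) s k).1 with hσ
        have hσlt : ∀ k : Fin s, σ k.1 < s := fun k => scanR_lt (pat z) s s k.1 (by omega) k.2
        refine ⟨fun k => ⟨σ k.1, hσlt k⟩, fun k => (scanR (pat z) s k.1).2, ?_, ?_⟩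
        · intro k
          have hcor := scanR_correct z s hA hB s k.1 (by omega) k.2
          have e1 : z k.1 = y k := by rw [hz]; simp [k.2]
          have e2 : z (σ k.1) = y ⟨σ k.1, hσlt k⟩ := by rw [hz]; simp [hσlt k]
          rw [← e1, ← e2]
          exact hcor
        · set T := Finset.image (fun k : Fin s => (⟨σ k.1, hσlt k⟩ : Fin s))
            Finset.univ with hT
          have hsub : T ⊆ Finset.univ.filter (fun t : Fin s => ¬ (t.1 + 2 < s)) ∪
              Finset.univ.filter
                (fun t : Fin s => t.1 + 2 < s ∧ pat z t.1 ≠ 0 ∧ pat z t.1 ≠ 1) := by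
            intro t ht
            rw [hT, Finset.mem_image] at ht
            obtain ⟨k, _, hk⟩ := ht
            have := scanR_stop (pat z) s s k.1 (by omega) k.2
            by_cases hc : t.1 + 2 < s
            · rcases this with h | h
              · rw [← hk] at hc; exact absurd hc h
              · exact Finset.mem_union_right _ (Finset.mem_filter.2 ⟨Finset.mem_univ _,
                  hc, by rw [← hk]; exact h⟩)
            · exact Finset.mem_union_left _ (Finset.mem_filter.2 ⟨Finset.mem_univ _, hc⟩)
          have h1 : (Finset.univ.filter (fun t : Fin s => ¬ (t.1 + 2 < s))).card ≤ 2 := by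
            have : (Finset.univ.filter (fun t : Fin s => ¬ (t.1 + 2 < s))).card ≤
                (Finset.range 2).card := by
              apply Finset.card_le_card_of_injOn (fun t => t.1 + 2 - s)
              · intro t ht
                have ht' := (Finset.mem_filter.1 ht).2
                have := t.2
                exact Finset.mem_range.2 (by dsimp only; omega)
              · intro a ha b hb hab
                have ha' := (Finset.mem_filter.1 ha).2
                have hb' := (Finset.mem_filter.1 hb).2
                have := a.2
                have := b.2
                apply Fin.ext
                simp only at hab
                omega
            simpa using this
          have h2 : (Finset.univ.filter
              (fun t : Fin s => t.1 + 2 < s ∧ pat z t.1 ≠ 0 ∧ pat z t.1 ≠ 1)).card ≤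
              Cs.card := by
            apply Finset.card_le_card_of_injOn Fin.val
            · intro t ht
              have ht' := (Finset.mem_filter.1 ht).2
              exact Finset.mem_filter.2 ⟨Finset.mem_range.2 (by omega), ht'.2⟩
            · intro a _ b _ hab
              exact Fin.ext hab
          calc T.card ≤ _ := Finset.card_le_card hsub
            _ ≤ _ := Finset.card_union_le _ _
            _ ≤ 2 + Cs.card := by omega
            _ ≤ N := by omega
    obtain ⟨σ', ν, hyk, hcard⟩ := main
    obtain ⟨p, x, hx⟩ := mem_cover y σ' ν hyk hcard
    exact Set.mem_iUnion.2 ⟨p, ⟨x, hx⟩⟩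
  calc dimH (tropD 2 av s) ≤ dimH (⋃ p, Set.range (H p)) := dimH_mono hcov
    _ = ⨆ p, dimH (Set.range (H p)) := dimH_iUnion _
    _ ≤ ((N : ℕ) : ℝ≥0∞) := by
        apply iSup_le
        intro p
        calc dimH (Set.range (H p)) ≤ dimH (Set.univ : Set (Fin N → ℝ)) :=
              (hLip p).dimH_range_le
          _ = N := Real.dimH_univ_pi_fin N

end
end Trop010

namespace Trop010
noncomputable section
open Classical Set ENNReal

theorem dimH_lower (s : ℕ) (hs : 4 ≤ s) :
    ((s / 4 + 1 : ℕ) : ℝ≥0∞) ≤ dimH (tropD 2 av s) := by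
  set m := s / 4 with hm
  have hm1 : 1 ≤ m := by omega
  have h4m : 4 * m ≤ s := by omega
  -- the parametrizing map
  let F : (Fin (m + 1) → ℝ) → (Fin s → ℝ) := fun p k =>
    if k.1 % 4 = 1 ∨ k.1 % 4 = 3 then p 0
    else if h : k.1 % 4 = 0 ∧ k.1 / 4 < m then p ⟨k.1 / 4 + 1, by omega⟩
    else p 0 + 1
  set U : Set (Fin (m + 1) → ℝ) :=
    ⋂ i : Fin (m + 1), {p | i.1 = 0 ∨ p 0 + 1 < p i} with hU
  have hUopen : IsOpen U := by
    apply isOpen_iInter_of_finite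
    intro i
    by_cases hi : i.1 = 0
    · convert isOpen_univ
      ext p; simp [hi]
    · have : {p : Fin (m + 1) → ℝ | i.1 = 0 ∨ p 0 + 1 < p i} = {p | p 0 + 1 < p i} := by
        ext p; simp [hi]
      rw [this]
      exact isOpen_lt ((continuous_apply 0).add continuous_const) (continuous_apply i)
  have hp₀ : (fun i : Fin (m + 1) => if i.1 = 0 then (0 : ℝ) else 2) ∈ U := by
    rw [hU]
    refine Set.mem_iInter.2 fun i => ?_
    by_cases hi : i.1 = 0
    · exact Or.inl hi
    · right
      simp [hi, Fin.ext_iff]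
  -- F is antilipschitz
  have hF : AntilipschitzWith 1 F := by
    apply AntilipschitzWith.of_le_mul_dist
    intro p q
    rw [NNReal.coe_one, one_mul, dist_pi_le_iff dist_nonneg]
    intro i
    rcases Nat.eq_zero_or_pos i.1 with hi | hi
    · have hi' : i = 0 := Fin.ext (by simpa using hi)
      have hk : (1 : ℕ) < s := by omega
      have e : ∀ r : Fin (m + 1) → ℝ, F r ⟨1, hk⟩ = r 0 := by
        intro r; simp only [F]; norm_num
      calc dist (p i) (q i) = dist (F p ⟨1, hk⟩) (F q ⟨1, hk⟩) := by rw [e, e, hi']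
        _ ≤ _ := dist_le_pi_dist _ _ _
    · obtain ⟨j, hj⟩ : ∃ j, i.1 = j + 1 := ⟨i.1 - 1, by omega⟩
      have hjm : j < m := by have := i.2; omega
      have hk : 4 * j < s := by omega
      have e : ∀ r : Fin (m + 1) → ℝ, F r ⟨4 * j, hk⟩ = r i := by
        intro r
        simp only [F]
        rw [if_neg (by omega), dif_pos ⟨by omega, by omega⟩]
        congr 1
        apply Fin.ext
        simp only []
        omega
      calc dist (p i) (q i) = dist (F p ⟨4 * j, hk⟩) (F q ⟨4 * j, hk⟩) := by rw [e, e]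
        _ ≤ _ := dist_le_pi_dist _ _ _
  -- image lands in tropD
  have hsub : F '' U ⊆ tropD 2 av s := by
    rintro - ⟨p, hp, rfl⟩
    intro j hj
    set z : ℕ → ℝ := fun k => if h : k < s then F p ⟨k, h⟩ else 0 with hz
    have hz1 : ∀ k, k < s → k % 4 = 1 ∨ k % 4 = 3 → z k = p 0 := by
      intro k hk h
      simp only [hz, dif_pos hk, F]
      rw [if_pos h]
    have hz2 : ∀ k, k < s → k % 4 = 2 → z k = p 0 + 1 := by
      intro k hk h
      simp only [hz, dif_pos hk, F]
      rw [if_neg (by omega), dif_neg (by omega)]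
    have hz0 : ∀ k, k < s → k % 4 = 0 → p 0 + 1 ≤ z k := by
      intro k hk h
      simp only [hz, dif_pos hk, F]
      rw [if_neg (by omega)]
      by_cases hd : k % 4 = 0 ∧ k / 4 < m
      · rw [dif_pos hd]
        have := Set.mem_iInter.1 hp ⟨k / 4 + 1, by omega⟩
        rcases this with h' | h'
        · simp at h'
        · exact le_of_lt h'
      · rw [dif_neg hd]
    have a1 : ((av 1 : ℤ) : ℝ) = 1 := by norm_num [av]
    have a0 : ((av 0 : ℤ) : ℝ) = 0 := by norm_num [av]
    have a2 : ((av 2 : ℤ) : ℝ) = 0 := by norm_num [av]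
    have hj0 : j < s := by omega
    have hj1 : j + 1 < s := by omega
    have hj2 : j + 2 < s := hj
    rcases (by omega : j % 4 = 0 ∨ j % 4 = 1 ∨ j % 4 = 2 ∨ j % 4 = 3) with h | h | h | h
    · -- values (≥ p0+1, p0, p0+1) : min attained at 1, 2
      have v0 := hz0 j hj0 h
      have v1 := hz1 (j + 1) hj1 (by omega)
      have v2 := hz2 (j + 2) hj2 (by omega)
      exact ⟨1, 2, by norm_num, by norm_num, by norm_num,
        fun i hi => by interval_cases i <;> simp only [a0, a1, a2, Nat.add_zero, add_zero] <;> linarith,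
        fun i hi => by interval_cases i <;> simp only [a0, a1, a2, Nat.add_zero, add_zero] <;> linarith⟩
    · have v0 := hz1 j hj0 (by omega)
      have v1 := hz2 (j + 1) hj1 (by omega)
      have v2 := hz1 (j + 2) hj2 (by omega)
      exact ⟨0, 2, by norm_num, by norm_num, by norm_num,
        fun i hi => by interval_cases i <;> simp only [a0, a1, a2, Nat.add_zero, add_zero] <;> linarith,
        fun i hi => by interval_cases i <;> simp only [a0, a1, a2, Nat.add_zero, add_zero] <;> linarith⟩
    · have v0 := hz2 j hj0 h
      have v1 := hz1 (j + 1) hj1 (by omega)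
      have v2 := hz0 (j + 2) hj2 (by omega)
      exact ⟨0, 1, by norm_num, by norm_num, by norm_num,
        fun i hi => by interval_cases i <;> simp only [a0, a1, a2, Nat.add_zero, add_zero] <;> linarith,
        fun i hi => by interval_cases i <;> simp only [a0, a1, a2, Nat.add_zero, add_zero] <;> linarith⟩
    · have v0 := hz1 j hj0 (by omega)
      have v1 := hz0 (j + 1) hj1 (by omega)
      have v2 := hz1 (j + 2) hj2 (by omega)
      exact ⟨0, 2, by norm_num, by norm_num, by norm_num,
        fun i hi => by interval_cases i <;> simp only [a0, a1, a2, Nat.add_zero, add_zero] <;> linarith,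
        fun i hi => by interval_cases i <;> simp only [a0, a1, a2, Nat.add_zero, add_zero] <;> linarith⟩
  have hdimU : dimH U = ((m + 1 : ℕ) : ℝ≥0∞) := by
    rw [Real.dimH_of_nonempty_interior ⟨_, by rwa [hUopen.interior_eq]⟩]
    rw [Module.finrank_fin_fun]
  calc ((s / 4 + 1 : ℕ) : ℝ≥0∞) = ((m + 1 : ℕ) : ℝ≥0∞) := by rw [hm]
    _ = dimH U := hdimU.symm
    _ ≤ dimH (F '' U) := hF.le_dimH_image U
    _ ≤ dimH (tropD 2 av s) := dimH_mono hsub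
end
end Trop010

/-- For the vector `a = (0, 1, 0)` the tropical entropy equals `1/4`:
`lim_{s→∞} d(s)/s = 1/4`. Hence the lower bound `H ≥ 1/4` for non-regular integer
vectors is sharp. -/
theorem tropEntropy_010 :
    Tendsto (fun s : ℕ => tropHilbert 2 (fun i => if i = 1 then 1 else 0) s / s)
      atTop (𝓝 (1 / 4)) := by
  have key : ∀ s : ℕ, 4 ≤ s →
      1 / 4 ≤ tropHilbert 2 (fun i => if i = 1 then 1 else 0) s / s ∧
      tropHilbert 2 (fun i => if i = 1 then 1 else 0) s / s ≤ 1 / 4 + 2 / s := by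
    intro s hs
    have hup : dimH (tropD 2 (fun i => if i = 1 then 1 else 0) s) ≤
        ((2 + (s - 1) / 4 : ℕ) : ENNReal) := Trop010.dimH_upper s
    have hlo : ((s / 4 + 1 : ℕ) : ENNReal) ≤
        dimH (tropD 2 (fun i => if i = 1 then 1 else 0) s) := Trop010.dimH_lower s hs
    have htop : dimH (tropD 2 (fun i => if i = 1 then 1 else 0) s) ≠ ⊤ :=
      ne_top_of_le_ne_top (ENNReal.natCast_ne_top _) hup
    have h1 : ((s / 4 + 1 : ℕ) : ℝ) ≤ tropHilbert 2 (fun i => if i = 1 then 1 else 0) s := by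
      have := ENNReal.toReal_mono htop hlo
      rwa [ENNReal.toReal_natCast] at this
    have h2 : tropHilbert 2 (fun i => if i = 1 then 1 else 0) s ≤ ((2 + (s - 1) / 4 : ℕ) : ℝ) := by
      have := ENNReal.toReal_mono (ENNReal.natCast_ne_top _) hup
      rwa [ENNReal.toReal_natCast] at this
    have hs0 : (0 : ℝ) < s := by
      have : 0 < s := by omega
      exact_mod_cast this
    constructor
    · have hnat : s ≤ 4 * (s / 4 + 1) := by omega
      have hr : (s : ℝ) ≤ 4 * ((s / 4 + 1 : ℕ) : ℝ) := by exact_mod_cast hnat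
      rw [le_div_iff₀ hs0]
      calc (1 : ℝ) / 4 * s = s / 4 := by ring
        _ ≤ ((s / 4 + 1 : ℕ) : ℝ) := by linarith
        _ ≤ _ := h1
    · have hnat : 4 * (2 + (s - 1) / 4) ≤ s + 8 := by omega
      have hr : 4 * ((2 + (s - 1) / 4 : ℕ) : ℝ) ≤ (s : ℝ) + 8 := by exact_mod_cast hnat
      rw [div_le_iff₀ hs0]
      calc tropHilbert 2 (fun i => if i = 1 then 1 else 0) s
          ≤ ((2 + (s - 1) / 4 : ℕ) : ℝ) := h2
        _ ≤ ((s : ℝ) + 8) / 4 := by linarith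
        _ = (1 / 4 + 2 / s) * s := by field_simp; ring
  have hupper : Tendsto (fun s : ℕ => 1 / 4 + 2 / (s : ℝ)) atTop (𝓝 (1 / 4)) := by
    have h0 : Tendsto (fun s : ℕ => 2 / (s : ℝ)) atTop (𝓝 0) := by
      have := tendsto_one_div_atTop_nhds_zero_nat.const_mul (2 : ℝ)
      simpa [div_eq_mul_inv, mul_comm, mul_assoc] using this
    have := Tendsto.add
      (tendsto_const_nhds : Tendsto (fun _ : ℕ => (1 / 4 : ℝ)) atTop (𝓝 (1 / 4))) h0
    simpa using this
  apply tendsto_of_tendsto_of_tendsto_of_le_of_le' tendsto_const_nhds hupper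
  · exact Filter.eventually_atTop.2 ⟨4, fun s hs => (key s hs).1⟩
  · exact Filter.eventually_atTop.2 ⟨4, fun s hs => (key s hs).2⟩
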